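/- Let N be a positive integer, μ > 0, and define F_N(Δθ) := (2/π)·( Si((Nπ/2)(Δθ + μ)) − Si((Nπ/2)(Δθ − μ)) ). Then for every Δθ with |Δθ| > μ, the out-of-band leakage satisfies |F_N(Δθ)| ≤ (8/(Nπ²))·( 1/(|Δθ| + μ) + 1/(|Δθ| − μ) ). (Rigorous version of the exterior branch of the paper's Proposition 1: outside the target angular region the unconstrained beamforming-gain profile vanishes up to an O(1/N) correction.) -/

import Mathlib

open MeasureTheory intervalIntegral

noncomputable def sincf (t : ℝ) : ℝ := if t = 0 then 1 else Real.sin t / t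

lemma sincf_even (t : ℝ) : sincf (-t) = sincf t := by
  unfold sincf
  by_cases ht : t = 0
  · simp [ht]
  · rw [if_neg (by simpa using ht), if_neg ht, Real.sin_neg, neg_div_neg_eq]

lemma sincf_bound (t : ℝ) : ‖sincf t‖ ≤ 1 := by
  unfold sincf
  by_cases ht : t = 0
  · simp [ht]
  · rw [if_neg ht, Real.norm_eq_abs, abs_div, div_le_one (abs_pos.mpr ht)]
    exact Real.abs_sin_le_abs

lemma sincf_integrable (a b : ℝ) : IntervalIntegrable sincf volume a b := by
  constructor <;>
  · apply Measure.integrableOn_of_bounded (M := 1)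
    · exact (measure_Ioc_lt_top).ne
    · exact ((measurable_const.ite (measurableSet_singleton 0)
        (Real.measurable_sin.div measurable_id)).aestronglyMeasurable)
    · exact ae_of_all _ sincf_bound

lemma abs_integral_sin_div_le {a b : ℝ} (ha : 0 < a) (hab : a ≤ b) :
    |∫ t in a..b, Real.sin t / t| ≤ 2 / a := by
  have huIcc : Set.uIcc a b = Set.Icc a b := Set.uIcc_of_le hab
  have hpos : ∀ x ∈ Set.uIcc a b, 0 < x := by
    intro x hx
    rw [huIcc] at hx
    exact lt_of_lt_of_le ha hx.1
  have hu : ∀ x ∈ Set.uIcc a b, HasDerivAt (fun t : ℝ => t⁻¹) (-((x:ℝ)^2)⁻¹) x := by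
    intro x hx
    simpa using hasDerivAt_inv (ne_of_gt (hpos x hx))
  have hv : ∀ x ∈ Set.uIcc a b, HasDerivAt (fun t : ℝ => -Real.cos t) (Real.sin x) x := by
    intro x _
    have h := (Real.hasDerivAt_cos x).neg; rw [neg_neg] at h; exact h
  have hcont : ContinuousOn (fun x : ℝ => -((x:ℝ)^2)⁻¹) (Set.uIcc a b) := by
    apply ContinuousOn.neg
    apply ContinuousOn.inv₀ (by fun_prop)
    intro x hx
    exact pow_ne_zero _ (ne_of_gt (hpos x hx))
  have hu' : IntervalIntegrable (fun x : ℝ => -((x:ℝ)^2)⁻¹) volume a b :=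
    hcont.intervalIntegrable
  have hv' : IntervalIntegrable Real.sin volume a b :=
    Real.continuous_sin.intervalIntegrable a b
  have hIBP := intervalIntegral.integral_mul_deriv_eq_deriv_mul hu hv hu' hv'
  have hrw : (∫ t in a..b, Real.sin t / t) = ∫ t in a..b, t⁻¹ * Real.sin t := by
    apply intervalIntegral.integral_congr
    intro x _
    exact div_eq_inv_mul _ _
  have hrw2 : (∫ x in a..b, -((x:ℝ)^2)⁻¹ * -Real.cos x) = ∫ x in a..b, ((x:ℝ)^2)⁻¹ * Real.cos x := by
    apply intervalIntegral.integral_congr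
    intro x _; ring
  -- bound the remainder integral
  have hint2 : IntervalIntegrable (fun x : ℝ => ((x:ℝ)^2)⁻¹) volume a b := by
    apply ContinuousOn.intervalIntegrable
    apply ContinuousOn.inv₀ (by fun_prop)
    intro x hx
    exact pow_ne_zero _ (ne_of_gt (hpos x hx))
  have hzpow : (∫ x in a..b, ((x:ℝ)^2)⁻¹) = a⁻¹ - b⁻¹ := by
    have h0 : (0:ℝ) ∉ Set.uIcc a b := fun hc => absurd (hpos 0 hc) (lt_irrefl 0)
    have := integral_zpow (a := a) (b := b) (n := -2) (Or.inr ⟨by norm_num, h0⟩)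
    rw [show ((-2 : ℤ) + 1) = -1 by norm_num] at this
    simp only [zpow_neg, zpow_one, zpow_two] at this
    calc (∫ x in a..b, ((x:ℝ)^2)⁻¹) = ∫ x in a..b, (x*x)⁻¹ := by
            apply intervalIntegral.integral_congr; intro x _; exact congrArg Inv.inv (sq x)
      _ = a⁻¹ - b⁻¹ := by rw [this]; push_cast; ring
  have hbound : |∫ x in a..b, ((x:ℝ)^2)⁻¹ * Real.cos x| ≤ a⁻¹ - b⁻¹ := by
    rw [← hzpow]
    have := intervalIntegral.norm_integral_le_abs_of_norm_le
      (f := fun x => ((x:ℝ)^2)⁻¹ * Real.cos x) (g := fun x => ((x:ℝ)^2)⁻¹)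
      (μ := volume) (a := a) (b := b) ?_ hint2
    · refine this.trans ?_
      rw [abs_of_nonneg]
      apply intervalIntegral.integral_nonneg hab
      intro x _; positivity
    · apply ae_of_all
      intro x
      simp only [Real.norm_eq_abs, abs_mul, abs_inv, abs_pow, sq_abs]
      calc ((x:ℝ)^2)⁻¹ * |Real.cos x| ≤ (x^2)⁻¹ * 1 :=
            mul_le_mul_of_nonneg_left (Real.abs_cos_le_one x) (by positivity)
        _ = (x^2)⁻¹ := mul_one _
  rw [hrw, hIBP, hrw2]
  have hb : 0 < b := lt_of_lt_of_le ha hab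
  have hca := Real.abs_cos_le_one a
  have hcb := Real.abs_cos_le_one b
  have h1 : |b⁻¹ * -Real.cos b| ≤ b⁻¹ := by
    rw [abs_mul, abs_neg, abs_of_pos (inv_pos.mpr hb)]
    nlinarith [inv_pos.mpr hb]
  have h2 : |a⁻¹ * -Real.cos a| ≤ a⁻¹ := by
    rw [abs_mul, abs_neg, abs_of_pos (inv_pos.mpr ha)]
    nlinarith [inv_pos.mpr ha]
  have h3 : |b⁻¹ * -Real.cos b - a⁻¹ * -Real.cos a - ∫ x in a..b, ((x:ℝ)^2)⁻¹ * Real.cos x|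
      ≤ b⁻¹ + a⁻¹ + (a⁻¹ - b⁻¹) := by
    calc _ ≤ |b⁻¹ * -Real.cos b - a⁻¹ * -Real.cos a| + |∫ x in a..b, ((x:ℝ)^2)⁻¹ * Real.cos x| :=
          abs_sub _ _
      _ ≤ (|b⁻¹ * -Real.cos b| + |a⁻¹ * -Real.cos a|) + (a⁻¹ - b⁻¹) := by
          gcongr; exact abs_sub _ _
      _ ≤ b⁻¹ + a⁻¹ + (a⁻¹ - b⁻¹) := by gcongr
  refine h3.trans ?_
  rw [div_eq_mul_inv]
  linarith


/-- Sine integral `Si(x) = ∫₀ˣ sin t / t dt`, with the integrand extended by `1` at `t = 0`. -/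
noncomputable def Si (x : ℝ) : ℝ :=
  ∫ t in (0 : ℝ)..x, if t = 0 then 1 else Real.sin t / t


lemma Si_eq (x : ℝ) : Si x = ∫ t in (0:ℝ)..x, sincf t := rfl

lemma Si_neg (x : ℝ) : Si (-x) = -Si x := by
  rw [Si_eq, Si_eq]
  have h1 : ∫ t in (0:ℝ)..(-x), sincf t = ∫ t in (0:ℝ)..(-x), sincf (-t) :=
    intervalIntegral.integral_congr (fun t _ => (sincf_even t).symm)
  rw [h1, intervalIntegral.integral_comp_neg]
  rw [neg_neg, neg_zero]
  exact intervalIntegral.integral_symm 0 x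

lemma Si_sub (x y : ℝ) : Si x - Si y = ∫ t in y..x, sincf t := by
  rw [Si_eq, Si_eq]
  exact intervalIntegral.integral_interval_sub_left (sincf_integrable 0 x) (sincf_integrable 0 y)

lemma Si_diff_bound {c d m : ℝ} (hc : 0 < c) (hm : 0 < m) (hd : m < d) :
    |Si (c * (d + m)) - Si (c * (d - m))| ≤ 2 / (c * (d - m)) := by
  have ha : 0 < c * (d - m) := mul_pos hc (by linarith)
  have hab : c * (d - m) ≤ c * (d + m) := by nlinarith
  rw [Si_sub]
  have hcongr : (∫ t in c * (d - m)..c * (d + m), sincf t)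
      = ∫ t in c * (d - m)..c * (d + m), Real.sin t / t := by
    apply intervalIntegral.integral_congr
    intro t ht
    rw [Set.uIcc_of_le hab] at ht
    have : t ≠ 0 := ne_of_gt (lt_of_lt_of_le ha ht.1)
    simp [sincf, this]
  rw [hcongr]
  exact abs_integral_sin_div_le ha hab

/-- Rigorous version of the exterior branch of the paper's Proposition 1: outside the
target angular region `|Δθ| > μ`, the (normalized) unconstrained beamforming-gain
profile `F_N(Δθ) = (2/π)(Si((Nπ/2)(Δθ+μ)) - Si((Nπ/2)(Δθ-μ)))` vanishes up to an
`O(1/N)` correction. -/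
theorem out_of_band_leakage_bound (N : ℕ) (hN : 0 < N) (μ : ℝ) (hμ : 0 < μ)
    (Δθ : ℝ) (h : μ < |Δθ|) :
    |(2 / Real.pi) * (Si (((N : ℝ) * Real.pi / 2) * (Δθ + μ))
        - Si (((N : ℝ) * Real.pi / 2) * (Δθ - μ)))|
      ≤ (8 / ((N : ℝ) * Real.pi ^ 2)) * (1 / (|Δθ| + μ) + 1 / (|Δθ| - μ)) := by
  have hπ := Real.pi_pos
  have hNpos : (0:ℝ) < N := Nat.cast_pos.mpr hN
  set c := (N:ℝ) * Real.pi / 2 with hc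
  have hcpos : 0 < c := by positivity
  set d := |Δθ| with hd
  have hdm : 0 < d - μ := by linarith
  have habs : |Si (c * (Δθ + μ)) - Si (c * (Δθ - μ))|
      = |Si (c * (d + μ)) - Si (c * (d - μ))| := by
    rcases abs_cases Δθ with ⟨h1, _⟩ | ⟨h1, _⟩
    · rw [hd, h1]
    · rw [hd, h1]
      have e1 : c * (Δθ + μ) = -(c * (-Δθ - μ)) := by ring
      have e2 : c * (Δθ - μ) = -(c * (-Δθ + μ)) := by ring
      rw [e1, e2, Si_neg, Si_neg,
        show -Si (c * (-Δθ - μ)) - -Si (c * (-Δθ + μ))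
          = Si (c * (-Δθ + μ)) - Si (c * (-Δθ - μ)) from by ring]

  have hbound := Si_diff_bound hcpos hμ h
  rw [abs_mul, abs_of_pos (by positivity : (0:ℝ) < 2 / Real.pi), habs]
  have key : 2 / Real.pi * |Si (c * (d + μ)) - Si (c * (d - μ))|
      ≤ 2 / Real.pi * (2 / (c * (d - μ))) :=
    mul_le_mul_of_nonneg_left hbound (by positivity)
  refine key.trans ?_
  have heq : 2 / Real.pi * (2 / (c * (d - μ)))
      = 8 / ((N:ℝ) * Real.pi ^ 2) * (1 / (d - μ)) := by
    rw [hc]; field_simp; ring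
  rw [heq, mul_add]
  have hpos2 : 0 ≤ 8 / ((N:ℝ) * Real.pi ^ 2) * (1 / (d + μ)) := by positivity
  linarith
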